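/- Let k ≥ 2, let G be a graph with κ(G) ≥ k+1, let S be a k-resolving set of G, and let x, y be distinct vertices distinguished by vertices s_1,...,s_k ∈ S. Then there exists a vertex s ∈ V(G) \ {s_1,...,s_k} with d(s, S) ≤ 2 that distinguishes x and y. -/

import Mathlib

open SimpleGraph Function
open scoped Classical

/-- A set `S` is a resolving set of `G`: every pair of distinct vertices differ in
distance to some element of `S`. -/
def IsResolving {V : Type*} (G : SimpleGraph V) (S : Set V) : Prop :=
  ∀ x y : V, x ≠ y → ∃ s ∈ S, G.dist s x ≠ G.dist s y

/-- A fault-tolerant resolving set: removing any single vertex leaves a resolving set. -/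
def IsFTResolving {V : Type*} (G : SimpleGraph V) (S : Set V) : Prop :=
  ∀ s ∈ S, IsResolving G (S \ {s})

/-- The metric dimension of `G`. -/
noncomputable def metricDim {V : Type*} [Fintype V] (G : SimpleGraph V) : ℕ :=
  sInf {n | ∃ S : Finset V, IsResolving G ↑S ∧ S.card = n}

/-- The fault-tolerant metric dimension of `G`. -/
noncomputable def ftDim {V : Type*} [Fintype V] (G : SimpleGraph V) : ℕ :=
  sInf {n | ∃ S : Finset V, IsFTResolving G ↑S ∧ S.card = n}

/-- `S` is a `k`-resolving set: every pair of distinct vertices is distinguished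
by at least `k` vertices of `S`. -/
def IsKResolving {V : Type*} [Fintype V] (G : SimpleGraph V) (k : ℕ) (S : Finset V) : Prop :=
  ∀ x y : V, x ≠ y → k ≤ (S.filter (fun s => G.dist s x ≠ G.dist s y)).card

/-- The `k`-metric dimension of `G`. -/
noncomputable def kMetricDim {V : Type*} [Fintype V] (G : SimpleGraph V) (k : ℕ) : ℕ :=
  sInf {n | ∃ S : Finset V, IsKResolving G k S ∧ S.card = n}


/-- Step one vertex along a geodesic toward `z`. -/
private lemma dstep {V : Type*} {G : SimpleGraph V} (hG : G.Connected) {u z : V}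
    (h : G.dist u z ≠ 0) : ∃ u' : V, G.Adj u u' ∧ G.dist u' z + 1 = G.dist u z := by
  obtain ⟨p, hp⟩ := hG.exists_walk_length_eq_dist u z
  cases p with
  | nil => exact absurd SimpleGraph.dist_self h
  | cons hadj q =>
    rename_i c
    refine ⟨c, hadj, ?_⟩
    have h1 : G.dist c z ≤ q.length := SimpleGraph.dist_le q
    have h2 : G.dist u z ≤ G.dist u c + G.dist c z := hG.dist_triangle
    have h3 : G.dist u c ≤ 1 := by simpa using SimpleGraph.dist_le hadj.toWalk
    simp only [SimpleGraph.Walk.length_cons] at hp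
    omega

private lemma cl1 {V : Type*} {G : SimpleGraph V} (hG : G.Connected) (S : Finset V) (a b : V)
    (hnear : ∀ s : V, G.dist s a ≠ G.dist s b → (∃ w ∈ S, G.dist s w ≤ 2) → s ∈ S) :
    ∀ n : ℕ, ∀ u : V, u ∈ S → G.dist u a < G.dist u b → G.dist u a = n → a ∈ S := by
  intro n
  induction n with
  | zero =>
    intro u hu hlt h0
    have hua : u = a := hG.dist_eq_zero_iff.mp h0
    rwa [hua] at hu
  | succ n ih =>
    intro u hu hlt hn
    obtain ⟨u', hadj, hd⟩ := dstep hG (z := a) (u := u) (by omega)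
    have huu' : G.dist u u' ≤ 1 := by simpa using SimpleGraph.dist_le hadj.toWalk
    have hb' : G.dist u b ≤ G.dist u u' + G.dist u' b := hG.dist_triangle
    have hc : G.dist u' u = G.dist u u' := SimpleGraph.dist_comm
    have hu' : u' ∈ S := hnear u' (by omega) ⟨u, hu, by omega⟩
    exact ih u' hu' (by omega) (by omega)

private lemma cl2 {V : Type*} {G : SimpleGraph V} (hG : G.Connected) (S : Finset V) (a b : V)
    (hb : b ∈ S)
    (hnear : ∀ s : V, G.dist s a ≠ G.dist s b → (∃ w ∈ S, G.dist s w ≤ 2) → s ∈ S) :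
    ∀ n : ℕ, ∀ u : V, G.dist u b < G.dist u a → (∀ w ∈ S, 3 ≤ G.dist u w) →
      G.dist u b = n → False := by
  intro n
  induction n with
  | zero =>
    intro u hlt hfar h0
    have := hfar b hb; omega
  | succ n ih =>
    intro u hlt hfar hn
    obtain ⟨u', hadj, hd⟩ := dstep hG (z := b) (u := u) (by omega)
    have huu' : G.dist u u' ≤ 1 := by simpa using SimpleGraph.dist_le hadj.toWalk
    have ha' : G.dist u a ≤ G.dist u u' + G.dist u' a := hG.dist_triangle
    have hlt' : G.dist u' b < G.dist u' a := by omega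
    have hfar' : ∀ w ∈ S, 3 ≤ G.dist u' w := by
      intro w hw
      by_contra hcc
      have hu'S : u' ∈ S := hnear u' (by omega) ⟨w, hw, by omega⟩
      have := hfar u' hu'S
      omega
    exact ih u' hlt' hfar' (by omega)

private lemma cl3 {V : Type*} {G : SimpleGraph V} (hG : G.Connected) (S : Finset V) (a b : V)
    (hab : a ≠ b) (hb : b ∈ S)
    (hnear : ∀ s : V, G.dist s a ≠ G.dist s b → (∃ w ∈ S, G.dist s w ≤ 2) → s ∈ S) :
    ∀ n : ℕ, ∀ u : V, G.dist u a + G.dist u b = G.dist a b → G.dist u a < G.dist u b →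
      (∀ w ∈ S, 3 ≤ G.dist u w) → G.dist u b = n → False := by
  intro n
  induction n with
  | zero =>
    intro u _ _ hfar h0
    have := hfar b hb; omega
  | succ n ih =>
    intro u hsum hlt hfar hn
    obtain ⟨u', hadj, hd⟩ := dstep hG (z := b) (u := u) (by omega)
    have huu' : G.dist u u' ≤ 1 := by simpa using SimpleGraph.dist_le hadj.toWalk
    have hcm : G.dist u' u = G.dist u u' := SimpleGraph.dist_comm
    have htri1 : G.dist u' a ≤ G.dist u' u + G.dist u a := hG.dist_triangle
    have htri2 : G.dist a b ≤ G.dist a u' + G.dist u' b := hG.dist_triangle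
    have hcm2 : G.dist a u' = G.dist u' a := SimpleGraph.dist_comm
    have hua' : G.dist u' a = G.dist u a + 1 := by omega
    have hsum' : G.dist u' a + G.dist u' b = G.dist a b := by omega
    rcases Nat.lt_trichotomy (G.dist u' a) (G.dist u' b) with hc1 | hc2 | hc3
    · -- still nearer a: recurse
      have hfar' : ∀ w ∈ S, 3 ≤ G.dist u' w := by
        intro w hw
        by_contra hcc
        have hu'S : u' ∈ S := hnear u' (by omega) ⟨w, hw, by omega⟩
        have := hfar u' hu'S
        omega
      exact ih u' hsum' hc1 hfar' (by omega)
    · -- midpoint: take one more step, then nearer b, apply cl2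
      have hne0 : G.dist u' b ≠ 0 := by
        intro h0
        have h1 : G.dist u' a = 0 := by omega
        exact hab ((hG.dist_eq_zero_iff.mp h1).symm.trans (hG.dist_eq_zero_iff.mp h0))
      obtain ⟨u'', hadj2, hd2⟩ := dstep hG (z := b) (u := u') hne0
      have hu'u'' : G.dist u' u'' ≤ 1 := by simpa using SimpleGraph.dist_le hadj2.toWalk
      have hcm3 : G.dist u'' u' = G.dist u' u'' := SimpleGraph.dist_comm
      have htri3 : G.dist u'' a ≤ G.dist u'' u' + G.dist u' a := hG.dist_triangle
      have htri4 : G.dist a b ≤ G.dist a u'' + G.dist u'' b := hG.dist_triangle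
      have hcm4 : G.dist a u'' = G.dist u'' a := SimpleGraph.dist_comm
      have hua'' : G.dist u'' a = G.dist u' a + 1 := by omega
      have hlt'' : G.dist u'' b < G.dist u'' a := by omega
      have htri5 : G.dist u u'' ≤ G.dist u u' + G.dist u' u'' := hG.dist_triangle
      have hfar'' : ∀ w ∈ S, 3 ≤ G.dist u'' w := by
        intro w hw
        by_contra hcc
        have hu''S : u'' ∈ S := hnear u'' (by omega) ⟨w, hw, by omega⟩
        have := hfar u'' hu''S
        omega
      exact cl2 hG S a b hb hnear (G.dist u'' b) u'' hlt'' hfar'' rfl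
    · -- now nearer b: apply cl2
      have hfar' : ∀ w ∈ S, 3 ≤ G.dist u' w := by
        intro w hw
        by_contra hcc
        have hu'S : u' ∈ S := hnear u' (by omega) ⟨w, hw, by omega⟩
        have := hfar u' hu'S
        omega
      exact cl2 hG S a b hb hnear (G.dist u' b) u' hc3 hfar' rfl

theorem stmt14 {V : Type*} [Fintype V] (G : SimpleGraph V) (hG : G.Connected)
    (k : ℕ) (hk : 2 ≤ k)
    (hκ : ∀ x y : V, x ≠ y →
      k + 1 ≤ (Finset.univ.filter (fun s : V => G.dist s x ≠ G.dist s y)).card)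
    (S : Finset V) (hS : IsKResolving G k S)
    (x y : V) (hxy : x ≠ y)
    (f : Fin k → V) (hf : Injective f) (hfS : ∀ i, f i ∈ S)
    (hfd : ∀ i, G.dist (f i) x ≠ G.dist (f i) y) :
    ∃ s : V, s ∉ Set.range f ∧ (∃ w ∈ S, G.dist s w ≤ 2) ∧
      G.dist s x ≠ G.dist s y := by
  by_contra h
  push_neg at h
  -- h : ∀ s, s ∉ range f → (∃ w ∈ S, dist s w ≤ 2) → dist s x = dist s y
  have hmem : ∀ s : V, G.dist s x ≠ G.dist s y → (∃ w ∈ S, G.dist s w ≤ 2) →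
      s ∈ Set.range f := by
    intro s hP hw
    by_contra hs
    exact hP (h s hs hw)
  have hnear : ∀ s : V, G.dist s x ≠ G.dist s y → (∃ w ∈ S, G.dist s w ≤ 2) → s ∈ S := by
    intro s hP hw
    obtain ⟨i, rfl⟩ := hmem s hP hw
    exact hfS i
  have hnear' : ∀ s : V, G.dist s y ≠ G.dist s x → (∃ w ∈ S, G.dist s w ≤ 2) → s ∈ S :=
    fun s hP hw => hnear s (Ne.symm hP) hw
  by_cases hx : x ∈ S <;> by_cases hy : y ∈ S
  · -- both x and y in S : use a far distinguishing vertex outside range f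
    obtain ⟨u₀, hu₀P, hu₀f⟩ : ∃ u : V, G.dist u x ≠ G.dist u y ∧ u ∉ Set.range f := by
      have hcard := hκ x y hxy
      have himg : (Finset.univ.image f).card ≤ k := by
        calc (Finset.univ.image f).card ≤ (Finset.univ : Finset (Fin k)).card :=
              Finset.card_image_le
        _ = k := by simp
      by_contra hc
      push_neg at hc
      have hsub : Finset.univ.filter (fun s : V => G.dist s x ≠ G.dist s y) ⊆
          Finset.univ.image f := by
        intro u hu
        rw [Finset.mem_filter] at hu
        obtain ⟨i, hi⟩ := hc u hu.2
        exact Finset.mem_image.mpr ⟨i, Finset.mem_univ i, hi⟩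
      have := Finset.card_le_card hsub
      omega
    have hfar₀ : ∀ w ∈ S, 3 ≤ G.dist u₀ w := by
      intro w hw
      by_contra hcc
      exact hu₀f (hmem u₀ hu₀P ⟨w, hw, by omega⟩)
    rcases Nat.lt_or_ge (G.dist u₀ x) (G.dist u₀ y) with hlt | hge
    · exact cl2 hG S y x hx hnear' (G.dist u₀ x) u₀ hlt hfar₀ rfl
    · exact cl2 hG S x y hy hnear (G.dist u₀ y) u₀ (by omega) hfar₀ rfl
  · -- x ∈ S, y ∉ S : walk from y toward x
    have hyf : y ∉ Set.range f := by
      rintro ⟨i, rfl⟩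
      exact hy (hfS i)
    have h0 : G.dist y y = 0 := SimpleGraph.dist_self
    have h1 : 0 < G.dist y x := hG.pos_dist_of_ne (Ne.symm hxy)
    have hPy : G.dist y x ≠ G.dist y y := by omega
    have hfary : ∀ w ∈ S, 3 ≤ G.dist y w := by
      intro w hw
      by_contra hcc
      exact hyf (hmem y hPy ⟨w, hw, by omega⟩)
    exact cl3 hG S y x (Ne.symm hxy) hx hnear' (G.dist y x) y (by omega) (by omega) hfary rfl
  · -- x ∉ S, y ∈ S : walk from x toward y
    have hxf : x ∉ Set.range f := by
      rintro ⟨i, rfl⟩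
      exact hx (hfS i)
    have h0 : G.dist x x = 0 := SimpleGraph.dist_self
    have h1 : 0 < G.dist x y := hG.pos_dist_of_ne hxy
    have hPx : G.dist x x ≠ G.dist x y := by omega
    have hfarx : ∀ w ∈ S, 3 ≤ G.dist x w := by
      intro w hw
      by_contra hcc
      exact hxf (hmem x hPx ⟨w, hw, by omega⟩)
    exact cl3 hG S x y hxy hy hnear (G.dist x y) x (by omega) (by omega) hfarx rfl
  · -- neither in S : walk from f 0 toward the nearer of x, y
    have hkpos : 0 < k := by omega
    set i0 : Fin k := ⟨0, hkpos⟩ with hi0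
    have hs₁S : f i0 ∈ S := hfS i0
    have hs₁P := hfd i0
    rcases Nat.lt_or_ge (G.dist (f i0) x) (G.dist (f i0) y) with hlt | hge
    · exact hx (cl1 hG S x y hnear (G.dist (f i0) x) (f i0) hs₁S hlt rfl)
    · exact hy (cl1 hG S y x hnear' (G.dist (f i0) y) (f i0) hs₁S (by omega) rfl)
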